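/- arXiv:1609.06343 — 3 statements merged into one kernel-verified Lean document; each statement's English description precedes it below -/
import Mathlib

section
/- Let n ≥ 1, let U, V ⊆ ℂ be open sets, let g, h : U → ℂ and f : V → ℂ be holomorphic with h(U) ⊆ V. Define a matrix-valued function M : U → Matrix (Fin n) (Fin n) ℂ (entries indexed 0,…,n−1) by the recursion: M_{0,0} = g; M_{i,j} = 0 whenever i > j; and for j ≥ 1 and 0 ≤ i ≤ j, M_{i,j} = (M_{i,j−1})′ + M_{i−1,j−1}·h′ (with the convention M_{−1,j−1} = 0). Then for every 0 ≤ j ≤ n−1 and every z ∈ U, the j-th derivative of z ↦ g(z)·f(h(z)) at z equals Σ_{k=0}^{n−1} f^{(k)}(h(z))·M_{k,j}(z). -/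
open Filter Topology Matrix

lemma fin_sub_one_val {n : ℕ} [NeZero n] (a : Fin n) (ha : (a : ℕ) ≠ 0) :
    ((a - 1 : Fin n) : ℕ) = (a : ℕ) - 1 := by
  rcases n with _ | m
  · exact a.elim0
  · rw [Fin.coe_sub_one, if_neg (fun hc => ha (by simp [hc]))]

noncomputable def wcmN (g h : ℂ → ℂ) : ℕ → ℕ → ℂ → ℂ
  | i, 0 => if i = 0 then g else fun _ => 0
  | i, j+1 => fun z =>
      deriv (wcmN g h i j) z + (if i = 0 then 0 else wcmN g h (i-1) j z) * deriv h z

lemma wcmN_zero_of_lt (g h : ℂ → ℂ) : ∀ j i : ℕ, j < i → wcmN g h i j = fun _ => 0 := by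
  intro j
  induction j with
  | zero =>
    intro i hi
    show (if i = 0 then g else fun _ => 0) = fun _ => 0
    rw [if_neg (by omega : ¬ i = 0)]
  | succ j ih =>
    intro i hi
    have h1 : wcmN g h i j = fun _ => 0 := ih i (by omega)
    have h2 : wcmN g h (i-1) j = fun _ => 0 := ih (i-1) (by omega)
    funext z
    show deriv (wcmN g h i j) z + (if i = 0 then 0 else wcmN g h (i-1) j z) * deriv h z = 0
    rw [h1, h2, if_neg (by omega : i ≠ 0)]
    simp

lemma wcmN_analytic {U : Set ℂ} (hU : IsOpen U) {g h : ℂ → ℂ}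
    (hg : AnalyticOnNhd ℂ g U) (hh : AnalyticOnNhd ℂ h U) :
    ∀ j i : ℕ, AnalyticOnNhd ℂ (wcmN g h i j) U := by
  intro j
  induction j with
  | zero =>
    intro i
    rcases Nat.eq_zero_or_pos i with hi | hi
    · simpa [wcmN, hi] using hg
    · rw [wcmN_zero_of_lt g h 0 i hi]
      exact analyticOnNhd_const
  | succ j ih =>
    intro i
    show AnalyticOnNhd ℂ (fun z =>
      deriv (wcmN g h i j) z + (if i = 0 then 0 else wcmN g h (i-1) j z) * deriv h z) U
    refine ((ih i).deriv).add (AnalyticOnNhd.mul ?_ hh.deriv)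
    split
    · exact analyticOnNhd_const
    · exact ih (i-1)

lemma wcmN_main {U V : Set ℂ} (hU : IsOpen U) (hV : IsOpen V) {g h f : ℂ → ℂ}
    (hg : DifferentiableOn ℂ g U) (hh : DifferentiableOn ℂ h U)
    (hf : DifferentiableOn ℂ f V) (hUV : Set.MapsTo h U V) :
    ∀ j : ℕ, ∀ z ∈ U, iteratedDeriv j (fun w => g w * f (h w)) z
      = ∑ k ∈ Finset.range (j+1), iteratedDeriv k f (h z) * wcmN g h k j z := by
  have ga : AnalyticOnNhd ℂ g U := hg.analyticOnNhd hU
  have ha : AnalyticOnNhd ℂ h U := hh.analyticOnNhd hU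
  have fa : AnalyticOnNhd ℂ f V := hf.analyticOnNhd hV
  have fk_an : ∀ k : ℕ, AnalyticOnNhd ℂ (iteratedDeriv k f) V := by
    intro k
    rw [iteratedDeriv_eq_iterate]
    exact fa.iterated_deriv k
  have N_an : ∀ j i : ℕ, AnalyticOnNhd ℂ (wcmN g h i j) U := wcmN_analytic hU ga ha
  intro j
  induction j with
  | zero =>
    intro z hz
    simp [iteratedDeriv_zero, wcmN, mul_comm]
  | succ j ih =>
    intro z hz
    rw [iteratedDeriv_succ]
    have hev : (iteratedDeriv j (fun w => g w * f (h w)))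
        =ᶠ[nhds z] (fun w => ∑ k ∈ Finset.range (j+1),
          iteratedDeriv k f (h w) * wcmN g h k j w) := by
      filter_upwards [hU.mem_nhds hz] with w hw using ih w hw
    rw [hev.deriv_eq]
    have hdh : HasDerivAt h (deriv h z) z :=
      (hh.differentiableAt (hU.mem_nhds hz)).hasDerivAt
    have hterm : ∀ k ∈ Finset.range (j+1),
        HasDerivAt (fun w => iteratedDeriv k f (h w) * wcmN g h k j w)
          (iteratedDeriv (k+1) f (h z) * deriv h z * wcmN g h k j z
            + iteratedDeriv k f (h z) * deriv (wcmN g h k j) z) z := by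
      intro k _
      have hfk : HasDerivAt (iteratedDeriv k f) (iteratedDeriv (k+1) f (h z)) (h z) := by
        rw [iteratedDeriv_succ]
        exact ((fk_an k (h z) (hUV hz)).differentiableAt).hasDerivAt
      have hcomp : HasDerivAt (fun w => iteratedDeriv k f (h w))
          (iteratedDeriv (k+1) f (h z) * deriv h z) z := hfk.comp z hdh
      have hNk : HasDerivAt (wcmN g h k j) (deriv (wcmN g h k j) z) z :=
        ((N_an j k z hz).differentiableAt).hasDerivAt
      exact hcomp.mul hNk
    have hsum := HasDerivAt.fun_sum hterm
    rw [hsum.deriv]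
    -- now the algebraic part
    have e1 : ∑ k ∈ Finset.range (j+2), iteratedDeriv k f (h z) * wcmN g h k (j+1) z
        = ∑ k ∈ Finset.range (j+1), iteratedDeriv k f (h z) * deriv (wcmN g h k j) z
          + ∑ k ∈ Finset.range (j+1),
              iteratedDeriv (k+1) f (h z) * deriv h z * wcmN g h k j z := by
      have hexp : ∀ k ∈ Finset.range (j+2), iteratedDeriv k f (h z) * wcmN g h k (j+1) z
          = iteratedDeriv k f (h z) * deriv (wcmN g h k j) z
            + iteratedDeriv k f (h z) * (if k = 0 then 0 else wcmN g h (k-1) j z)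
              * deriv h z := by
        intro k _
        show iteratedDeriv k f (h z) * (deriv (wcmN g h k j) z
          + (if k = 0 then 0 else wcmN g h (k-1) j z) * deriv h z) = _
        ring
      rw [Finset.sum_congr rfl hexp, Finset.sum_add_distrib]
      congr 1
      · rw [Finset.sum_range_succ]
        have hzero : deriv (wcmN g h (j+1) j) z = 0 := by
          rw [wcmN_zero_of_lt g h j (j+1) (by omega)]
          simp
        rw [hzero, mul_zero, add_zero]
      · rw [Finset.sum_range_succ' (fun k =>
          iteratedDeriv k f (h z) * (if k = 0 then 0 else wcmN g h (k-1) j z) * deriv h z)]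
        simp only [if_neg (Nat.succ_ne_zero _), reduceIte, ite_true, Nat.add_sub_cancel,
          mul_zero, zero_mul, add_zero]
        exact Finset.sum_congr rfl fun k _ => by ring
    rw [e1, ← Finset.sum_add_distrib]
    exact Finset.sum_congr rfl fun k _ => by ring

/-- the matrix `M = M₂(h′)M₁(g)` defined by the recursion
`M_{0,0} = g`, `M_{i,j} = 0` for `i > j`, and
`M_{i,j} = (M_{i,j−1})′ + M_{i−1,j−1}·h′` expresses the `j`-th derivative of
`z ↦ g z * f (h z)` as `∑ k, f^{(k)}(h z) * M_{k,j}(z)`. -/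
theorem wronskian_composition_matrix (n : ℕ) [NeZero n] (U V : Set ℂ)
    (hU : IsOpen U) (hV : IsOpen V) (g h f : ℂ → ℂ)
    (hg : DifferentiableOn ℂ g U) (hh : DifferentiableOn ℂ h U)
    (hf : DifferentiableOn ℂ f V) (hUV : Set.MapsTo h U V)
    (M : ℂ → Matrix (Fin n) (Fin n) ℂ)
    (hM00 : ∀ z ∈ U, M z 0 0 = g z)
    (hMlow : ∀ i j : Fin n, (j : ℕ) < (i : ℕ) → ∀ z ∈ U, M z i j = 0)
    (hMrec : ∀ i j : Fin n, 1 ≤ (j : ℕ) → (i : ℕ) ≤ (j : ℕ) → ∀ z ∈ U,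
      M z i j = deriv (fun w => M w i (j - 1)) z
        + (if (i : ℕ) = 0 then 0 else M z (i - 1) (j - 1)) * deriv h z) :
    ∀ j : Fin n, ∀ z ∈ U,
      iteratedDeriv (j : ℕ) (fun w => g w * f (h w)) z
        = ∑ k : Fin n, iteratedDeriv (k : ℕ) f (h z) * M z k j := by
  -- step 1: M agrees with wcmN on U
  have key : ∀ m : ℕ, ∀ hm : m < n, ∀ i : Fin n, ∀ z ∈ U,
      M z i ⟨m, hm⟩ = wcmN g h (i : ℕ) m z := by
    intro m
    induction m with
    | zero =>
      intro hm i z hz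
      rcases Nat.eq_zero_or_pos (i : ℕ) with hi | hi
      · have : i = 0 := Fin.ext hi
        subst this
        have h0 : (⟨0, hm⟩ : Fin n) = 0 := rfl
        rw [h0, hM00 z hz]
        simp [wcmN]
      · rw [hMlow i ⟨0, hm⟩ hi z hz, wcmN_zero_of_lt g h 0 (i : ℕ) hi]
    | succ m ihm =>
      intro hm i z hz
      have hm' : m < n := by omega
      rcases le_or_gt (i : ℕ) (m+1) with hi | hi
      · have hrec := hMrec i ⟨m+1, hm⟩ (by simp) hi z hz
        have hsub : (⟨m+1, hm⟩ : Fin n) - 1 = ⟨m, hm'⟩ := by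
          apply Fin.ext
          rw [fin_sub_one_val (⟨m+1, hm⟩ : Fin n) (by simp)]
          simp
        rw [hsub] at hrec
        have hderiv : deriv (fun w => M w i ⟨m, hm'⟩) z = deriv (wcmN g h (i : ℕ) m) z := by
          apply Filter.EventuallyEq.deriv_eq
          filter_upwards [hU.mem_nhds hz] with w hw using ihm hm' i w hw
        rw [hrec, hderiv]
        show _ = deriv (wcmN g h (i:ℕ) m) z
          + (if (i:ℕ) = 0 then 0 else wcmN g h ((i:ℕ)-1) m z) * deriv h z
        congr 1
        congr 1
        rcases Nat.eq_zero_or_pos (i : ℕ) with h0 | h0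
        · simp [h0]
        · rw [if_neg (by omega), if_neg (by omega)]
          have : ((i - 1 : Fin n) : ℕ) = (i : ℕ) - 1 := by
            rw [fin_sub_one_val i (by omega)]
          rw [ihm hm' (i-1) z hz, this]
      · rw [hMlow i ⟨m+1, hm⟩ hi z hz, wcmN_zero_of_lt g h (m+1) (i : ℕ) hi]
  intro j z hz
  have hmain := wcmN_main hU hV hg hh hf hUV (j : ℕ) z hz
  rw [hmain]
  have hrw : ∀ k : Fin n, iteratedDeriv (k : ℕ) f (h z) * M z k j
      = iteratedDeriv (k : ℕ) f (h z) * wcmN g h (k : ℕ) (j : ℕ) z := by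
    intro k
    have : M z k j = wcmN g h (k : ℕ) (j : ℕ) z := by
      have := key (j : ℕ) j.isLt k z hz
      simpa using this
    rw [this]
  rw [Finset.sum_congr rfl fun k _ => hrw k]
  rw [Fin.sum_univ_eq_sum_range (fun k => iteratedDeriv k f (h z) * wcmN g h k (j : ℕ) z) n]
  apply Finset.sum_subset
  · intro k hk
    simp only [Finset.mem_range] at *
    have := j.isLt
    omega
  · intro k _ hk
    simp only [Finset.mem_range] at hk
    rw [wcmN_zero_of_lt g h (j : ℕ) k (by omega)]
    simp
end

section
/- Let n ≥ 1, let U ⊆ ℂ be open, let g, h : U → ℂ be holomorphic, and let M : U → Matrix (Fin n) (Fin n) ℂ be defined by the recursion: M_{0,0} = g; M_{i,j} = 0 for i > j; and for j ≥ 1 and 0 ≤ i ≤ j, M_{i,j} = (M_{i,j−1})′ + M_{i−1,j−1}·h′ (with M_{−1,j−1} = 0). Then (a) the diagonal entries satisfy M_{j,j}(z) = g(z)·(h′(z))^j for all j and z ∈ U; and (b) for every z ∈ U, writing D(ε) = diag(1, ε, ε², …, ε^{n−1}), one has lim_{ε→0} D(ε)·M(z)ᵀ·D(ε)^{−1} =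 diag(g(z), g(z)h′(z), …, g(z)(h′(z))^{n−1}). -/
open Filter Topology Matrix

/-- for the matrix `M` defined by the recursion
`M_{0,0} = g`, `M_{i,j} = 0` for `i > j`,
`M_{i,j} = (M_{i,j−1})′ + M_{i−1,j−1}·h′`, one has
(a) `M_{j,j} = g·(h′)^j`, and
(b) `D(ε)·Mᵀ·D(ε)⁻¹ → diag(g, g h′, …, g (h′)^{n−1})` as `ε → 0`,
where `D(ε) = diag(1, ε, …, ε^{n−1})`. -/
theorem conjugated_wronskian_matrix_limit (n : ℕ) [NeZero n] (U : Set ℂ)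
    (hU : IsOpen U) (g h : ℂ → ℂ)
    (hg : DifferentiableOn ℂ g U) (hh : DifferentiableOn ℂ h U)
    (M : ℂ → Matrix (Fin n) (Fin n) ℂ)
    (hM00 : ∀ z ∈ U, M z 0 0 = g z)
    (hMlow : ∀ i j : Fin n, (j : ℕ) < (i : ℕ) → ∀ z ∈ U, M z i j = 0)
    (hMrec : ∀ i j : Fin n, 1 ≤ (j : ℕ) → (i : ℕ) ≤ (j : ℕ) → ∀ z ∈ U,
      M z i j = deriv (fun w => M w i (j - 1)) z
        + (if (i : ℕ) = 0 then 0 else M z (i - 1) (j - 1)) * deriv h z) :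
    (∀ j : Fin n, ∀ z ∈ U, M z j j = g z * (deriv h z) ^ (j : ℕ)) ∧
    (∀ z ∈ U,
      Tendsto (fun ε : ℂ =>
          Matrix.diagonal (fun i : Fin n => ε ^ (i : ℕ)) * (M z)ᵀ *
            Matrix.diagonal (fun i : Fin n => ε⁻¹ ^ (i : ℕ)))
        (𝓝[≠] 0)
        (𝓝 (Matrix.diagonal (fun i : Fin n => g z * (deriv h z) ^ (i : ℕ))))) := by
  have ha' : ∀ k : ℕ, ∀ hk : k < n, ∀ z ∈ U,
      M z ⟨k, hk⟩ ⟨k, hk⟩ = g z * (deriv h z) ^ k := by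
    intro k
    induction k with
    | zero =>
      intro hk z hz
      have h0 : (⟨0, hk⟩ : Fin n) = 0 := rfl
      rw [h0, hM00 z hz]; simp
    | succ k ih =>
      intro hk z hz
      have hkn : k < n := Nat.lt_of_succ_lt hk
      set j : Fin n := ⟨k + 1, hk⟩ with hj
      have hsub : j - 1 = ⟨k, hkn⟩ := by
        rw [sub_eq_iff_eq_add]
        ext
        simp [hj, Fin.add_def, Nat.mod_eq_of_lt (by omega : 1 < n),
          Nat.mod_eq_of_lt hk]
      have hrec := hMrec j j (by simp [hj]) le_rfl z hz
      rw [hsub] at hrec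
      have hzero : deriv (fun w => M w j ⟨k, hkn⟩) z = 0 := by
        have hev : (fun w => M w j ⟨k, hkn⟩) =ᶠ[nhds z] (fun _ => (0 : ℂ)) := by
          filter_upwards [hU.mem_nhds hz] with w hw
          exact hMlow j ⟨k, hkn⟩ (by simp [hj]) w hw
        rw [hev.deriv_eq]; exact deriv_const z 0
      rw [hzero, if_neg (by simp [hj] : ¬((j : ℕ) = 0)), ih hkn z hz] at hrec
      rw [hrec]; ring
  have ha : ∀ j : Fin n, ∀ z ∈ U, M z j j = g z * (deriv h z) ^ (j : ℕ) := by
    intro j z hz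
    have := ha' j.1 j.2 z hz
    simpa using this
  refine ⟨ha, ?_⟩
  intro z hz
  refine tendsto_pi_nhds.mpr ?_
  intro i
  rw [tendsto_pi_nhds]
  intro j
  have hentry : ∀ ε : ℂ,
      (Matrix.diagonal (fun i : Fin n => ε ^ (i : ℕ)) * (M z)ᵀ *
        Matrix.diagonal (fun i : Fin n => ε⁻¹ ^ (i : ℕ))) i j
      = ε ^ (i : ℕ) * M z j i * ε⁻¹ ^ (j : ℕ) := by
    intro ε
    rw [Matrix.mul_diagonal, Matrix.diagonal_mul, Matrix.transpose_apply]
  simp only [hentry]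
  rcases lt_trichotomy (i : ℕ) (j : ℕ) with hij | hij | hij
  · -- i < j : M z j i = 0
    have hz0 : M z j i = 0 := hMlow j i hij z hz
    have htgt : Matrix.diagonal (fun i : Fin n => g z * (deriv h z) ^ (i : ℕ)) i j = 0 := by
      rw [Matrix.diagonal_apply_ne _ (by exact fun hij' => absurd (congrArg Fin.val hij') (by omega))]
    rw [htgt]
    simpa [hz0] using (tendsto_const_nhds :
      Tendsto (fun _ : ℂ => (0 : ℂ)) (nhdsWithin 0 {(0:ℂ)}ᶜ) (nhds 0))
  · -- i = j
    have hij' : i = j := Fin.ext hij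
    subst hij'
    have htgt : Matrix.diagonal (fun i : Fin n => g z * (deriv h z) ^ (i : ℕ)) i i
        = g z * (deriv h z) ^ (i : ℕ) := Matrix.diagonal_apply_eq _ i
    rw [htgt]
    have heq : ∀ ε ∈ ({(0:ℂ)}ᶜ : Set ℂ),
        ε ^ (i : ℕ) * M z i i * ε⁻¹ ^ (i : ℕ) = g z * (deriv h z) ^ (i : ℕ) := by
      intro ε hε
      have hε0 : ε ≠ 0 := hε
      rw [ha i z hz]
      have hinv : ε ^ (i : ℕ) * ε⁻¹ ^ (i : ℕ) = 1 := by
        rw [← mul_pow, mul_inv_cancel₀ hε0, one_pow]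
      linear_combination (g z * deriv h z ^ (i : ℕ)) * hinv
    refine Tendsto.congr' ?_ tendsto_const_nhds
    filter_upwards [self_mem_nhdsWithin] with ε hε
    exact (heq ε hε).symm
  · -- j < i
    have htgt : Matrix.diagonal (fun i : Fin n => g z * (deriv h z) ^ (i : ℕ)) i j = 0 := by
      rw [Matrix.diagonal_apply_ne _ (by exact fun hij' => absurd (congrArg Fin.val hij') (by omega))]
    rw [htgt]
    have hmain : Tendsto (fun ε : ℂ => ε ^ ((i : ℕ) - (j : ℕ)) * M z j i)
        (nhds 0) (nhds 0) := by
      have := ((continuous_pow ((i : ℕ) - (j : ℕ))).tendsto (0:ℂ)).mul_const (M z j i)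
      simpa [zero_pow (by omega : (i:ℕ) - (j:ℕ) ≠ 0)] using this
    refine Tendsto.congr' ?_ (hmain.mono_left nhdsWithin_le_nhds)
    filter_upwards [self_mem_nhdsWithin] with ε hε
    have hε0 : (ε : ℂ) ≠ 0 := hε
    have hpow : ε ^ (i : ℕ) = ε ^ ((i:ℕ) - (j:ℕ)) * ε ^ (j : ℕ) := by
      rw [← pow_add, Nat.sub_add_cancel (le_of_lt hij)]
    rw [hpow]
    have hinv : ε ^ (j : ℕ) * ε⁻¹ ^ (j : ℕ) = 1 := by
      rw [← mul_pow, mul_inv_cancel₀ hε0, one_pow]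
    linear_combination (-(ε ^ ((i:ℕ) - (j:ℕ)) * M z j i)) * hinv
end

section
/- Let n ≥ 1, let U, V ⊆ ℂ be open, and let γ : U → ℂ be holomorphic with γ(U) ⊆ V. Let m₀ : U → ℂ, w_U, u_U : U → ℂ, and w_V, u_V : V → ℂ be holomorphic functions satisfying w_U(z) = w_V(γ(z))·m₀(z) and u_U(z) = u_V(γ(z))·γ′(z) for all z ∈ U. Define M : U → Matrix (Fin n) (Fin n) ℂ by: M_{0,0} = m₀; M_{i,j} = 0 for i > j; and for j ≥ 1, 0 ≤ i ≤ j, M_{i,j} = (M_{i,j−1})′ + M_{i−1,j−1}·γ′ (with M_{−1,j−1} = 0). For X ∈ {U, V} define E_X : X → Matrix (Fin n) (Fin n) ℂ by: (E_X)_{0,0} = w_X; (E_X)_{i,j} = 0 for i > j; and for j ≥ 1, 0 ≤ i ≤ j, (E_X)_{i,j} = ((E_X)_{i,j−1})′ + (E_X)_{i−1,j−1}·u_X (with (E_X)_{−1,j−1} = 0). Then E_V(γ(z))·M(z) = E_U(z) for every z ∈ U. -/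
open Matrix

namespace EquivHelpers

variable {m : ℕ}

lemma fin_sub_one_coe (c : Fin (m+1)) (hc : 1 ≤ (c : ℕ)) :
    ((c - 1 : Fin (m+1)) : ℕ) = (c : ℕ) - 1 := by
  rw [Fin.coe_sub_one, if_neg]
  intro h
  rw [h] at hc
  simp at hc

lemma succ_sub_one (k : Fin m) : (k.succ : Fin (m+1)) - 1 = k.castSucc := by
  ext
  rw [fin_sub_one_coe k.succ (by simp)]
  simp

/-- Upgrade: the recursion holds for all rows, not just `i ≤ j`. -/
lemma rec_all (S : Set ℂ) (hS : IsOpen S) (b : ℂ → ℂ)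
    (F : ℂ → Matrix (Fin (m+1)) (Fin (m+1)) ℂ)
    (hlow : ∀ i j : Fin (m+1), (j : ℕ) < (i : ℕ) → ∀ z ∈ S, F z i j = 0)
    (hrec : ∀ i j : Fin (m+1), 1 ≤ (j : ℕ) → (i : ℕ) ≤ (j : ℕ) → ∀ z ∈ S,
      F z i j = deriv (fun w => F w i (j - 1)) z
        + (if (i : ℕ) = 0 then 0 else F z (i - 1) (j - 1)) * b z) :
    ∀ i j : Fin (m+1), 1 ≤ (j : ℕ) → ∀ z ∈ S,
      F z i j = deriv (fun w => F w i (j - 1)) z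
        + (if (i : ℕ) = 0 then 0 else F z (i - 1) (j - 1)) * b z := by
  intro i j hj z hz
  by_cases hij : (i : ℕ) ≤ (j : ℕ)
  · exact hrec i j hj hij z hz
  push_neg at hij
  have hj' : ((j - 1 : Fin (m+1)) : ℕ) = (j : ℕ) - 1 := fin_sub_one_coe j hj
  have hi1 : 1 ≤ (i : ℕ) := by omega
  have hi' : ((i - 1 : Fin (m+1)) : ℕ) = (i : ℕ) - 1 := fin_sub_one_coe i hi1
  have hd : deriv (fun w => F w i (j - 1)) z = 0 := by
    have heq : Set.EqOn (fun w => F w i (j - 1)) (fun _ => (0 : ℂ)) S :=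
      fun w hw => hlow i (j - 1) (by omega) w hw
    rw [Filter.EventuallyEq.deriv_eq
      (Filter.eventuallyEq_of_mem (hS.mem_nhds hz) heq)]
    exact deriv_const z 0
  rw [hlow i j hij z hz, hd, if_neg (by omega),
    hlow (i - 1) (j - 1) (by omega) z hz]
  ring

/-- All entries of a triangular system are differentiable on `S`. -/
lemma diff_all (S : Set ℂ) (hS : IsOpen S) (a b : ℂ → ℂ)
    (ha : DifferentiableOn ℂ a S) (hb : DifferentiableOn ℂ b S)
    (F : ℂ → Matrix (Fin (m+1)) (Fin (m+1)) ℂ)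
    (h00 : ∀ z ∈ S, F z 0 0 = a z)
    (hlow : ∀ i j : Fin (m+1), (j : ℕ) < (i : ℕ) → ∀ z ∈ S, F z i j = 0)
    (hrec : ∀ i j : Fin (m+1), 1 ≤ (j : ℕ) → ∀ z ∈ S,
      F z i j = deriv (fun w => F w i (j - 1)) z
        + (if (i : ℕ) = 0 then 0 else F z (i - 1) (j - 1)) * b z) :
    ∀ i j : Fin (m+1), DifferentiableOn ℂ (fun z => F z i j) S := by
  suffices H : ∀ N : ℕ, ∀ j : Fin (m+1), (j : ℕ) ≤ N → ∀ i,
      DifferentiableOn ℂ (fun z => F z i j) S by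
    intro i j; exact H (j : ℕ) j le_rfl i
  intro N
  induction N with
  | zero =>
    intro j hj i
    have hj0 : j = 0 := by ext; simp only [Fin.val_zero]; omega
    subst hj0
    by_cases hi : i = 0
    · subst hi
      exact ha.congr (fun z hz => h00 z hz)
    · have hi' : (0 : ℕ) < (i : ℕ) := by
        rcases Nat.eq_zero_or_pos (i : ℕ) with h | h
        · exact absurd (by ext; simpa using h) hi
        · exact h
      exact (differentiableOn_const (0:ℂ)).congr
        (fun z hz => hlow i 0 (by simpa using hi') z hz)
  | succ N IH =>
    intro j hj i
    by_cases hjN : (j : ℕ) ≤ N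
    · exact IH j hjN i
    have hj1 : 1 ≤ (j : ℕ) := by omega
    have hj' : ((j - 1 : Fin (m+1)) : ℕ) = (j : ℕ) - 1 := fin_sub_one_coe j hj1
    have hd1 : DifferentiableOn ℂ (fun z => F z i (j - 1)) S :=
      IH (j - 1) (by omega) i
    have hd2 : DifferentiableOn ℂ (deriv (fun z => F z i (j - 1))) S :=
      ((hd1.analyticOnNhd hS).deriv.differentiableOn)
    have hd3 : DifferentiableOn ℂ
        (fun z => (if (i : ℕ) = 0 then 0 else F z (i - 1) (j - 1)) * b z) S := by
      by_cases hi : (i : ℕ) = 0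
      · simp only [hi, if_pos, zero_mul]
        exact differentiableOn_const 0
      · simp only [hi, if_neg, ite_false]
        exact (IH (j - 1) (by omega) (i - 1)).mul hb
    exact (hd2.add hd3).congr (fun z hz => hrec i j hj1 z hz)

end EquivHelpers

/-- equivariance identity `E_V(γ(z))·M(z) = E_U(z)` for the
triangular matrices defined by the recursions `M_{0,0} = m₀`,
`M_{i,j} = (M_{i,j−1})′ + M_{i−1,j−1}·γ′` and `(E_X)_{0,0} = w_X`,
`(E_X)_{i,j} = ((E_X)_{i,j−1})′ + (E_X)_{i−1,j−1}·u_X`, assuming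
`w_U = (w_V ∘ γ)·m₀` and `u_U = (u_V ∘ γ)·γ′`. -/
theorem equivariance_of_wronskian_correction (n : ℕ) [NeZero n]
    (U V : Set ℂ) (hU : IsOpen U) (hV : IsOpen V)
    (γ : ℂ → ℂ) (hγ : DifferentiableOn ℂ γ U) (hγUV : Set.MapsTo γ U V)
    (m₀ wU uU wV uV : ℂ → ℂ)
    (hm₀ : DifferentiableOn ℂ m₀ U) (hwU : DifferentiableOn ℂ wU U)
    (huU : DifferentiableOn ℂ uU U) (hwV : DifferentiableOn ℂ wV V)
    (huV : DifferentiableOn ℂ uV V)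
    (hw : ∀ z ∈ U, wU z = wV (γ z) * m₀ z)
    (hu : ∀ z ∈ U, uU z = uV (γ z) * deriv γ z)
    (M EU EV : ℂ → Matrix (Fin n) (Fin n) ℂ)
    (hM00 : ∀ z ∈ U, M z 0 0 = m₀ z)
    (hMlow : ∀ i j : Fin n, (j : ℕ) < (i : ℕ) → ∀ z ∈ U, M z i j = 0)
    (hMrec : ∀ i j : Fin n, 1 ≤ (j : ℕ) → (i : ℕ) ≤ (j : ℕ) → ∀ z ∈ U,
      M z i j = deriv (fun w => M w i (j - 1)) z
        + (if (i : ℕ) = 0 then 0 else M z (i - 1) (j - 1)) * deriv γ z)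
    (hEU00 : ∀ z ∈ U, EU z 0 0 = wU z)
    (hEUlow : ∀ i j : Fin n, (j : ℕ) < (i : ℕ) → ∀ z ∈ U, EU z i j = 0)
    (hEUrec : ∀ i j : Fin n, 1 ≤ (j : ℕ) → (i : ℕ) ≤ (j : ℕ) → ∀ z ∈ U,
      EU z i j = deriv (fun w => EU w i (j - 1)) z
        + (if (i : ℕ) = 0 then 0 else EU z (i - 1) (j - 1)) * uU z)
    (hEV00 : ∀ z ∈ V, EV z 0 0 = wV z)
    (hEVlow : ∀ i j : Fin n, (j : ℕ) < (i : ℕ) → ∀ z ∈ V, EV z i j = 0)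
    (hEVrec : ∀ i j : Fin n, 1 ≤ (j : ℕ) → (i : ℕ) ≤ (j : ℕ) → ∀ z ∈ V,
      EV z i j = deriv (fun w => EV w i (j - 1)) z
        + (if (i : ℕ) = 0 then 0 else EV z (i - 1) (j - 1)) * uV z) :
    ∀ z ∈ U, EV (γ z) * M z = EU z := by
  obtain ⟨m, rfl⟩ : ∃ m, n = m + 1 :=
    ⟨n - 1, (Nat.succ_pred_eq_of_pos (Nat.pos_of_ne_zero (NeZero.ne n))).symm⟩
  have hMrec' := EquivHelpers.rec_all U hU (deriv γ) M hMlow hMrec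
  have hEUrec' := EquivHelpers.rec_all U hU uU EU hEUlow hEUrec
  have hEVrec' := EquivHelpers.rec_all V hV uV EV hEVlow hEVrec
  have hMd := EquivHelpers.diff_all U hU m₀ (deriv γ) hm₀
    ((hγ.analyticOnNhd hU).deriv.differentiableOn) M hM00 hMlow hMrec'
  have hEVd := EquivHelpers.diff_all V hV wV uV hwV huV EV hEV00 hEVlow hEVrec'
  have KEY : ∀ N : ℕ, ∀ j : Fin (m+1), (j : ℕ) ≤ N → ∀ i : Fin (m+1), ∀ z ∈ U,
      (∑ k : Fin (m+1), EV (γ z) i k * M z k j) = EU z i j := by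
    intro N
    induction N with
    | zero =>
      intro j hj i z hz
      have hj0 : j = 0 := by ext; simp only [Fin.val_zero]; omega
      subst hj0
      rw [Fin.sum_univ_succ]
      rw [Finset.sum_eq_zero (fun k _ => by
        rw [hMlow k.succ 0 (by simp) z hz, mul_zero]), add_zero, hM00 z hz]
      by_cases hi : i = 0
      · subst hi
        rw [hEV00 (γ z) (hγUV hz), hEU00 z hz, hw z hz]
      · have hi' : (0 : ℕ) < (i : ℕ) := by
          rcases Nat.eq_zero_or_pos (i : ℕ) with h | h
          · exact absurd (by ext; simpa using h) hi
          · exact h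
        rw [hEVlow i 0 (by simpa using hi') (γ z) (hγUV hz),
          hEUlow i 0 (by simpa using hi') z hz, zero_mul]
    | succ N IH =>
      intro j hj i z hz
      by_cases hjN : (j : ℕ) ≤ N
      · exact IH j hjN i z hz
      have hj1 : 1 ≤ (j : ℕ) := by omega
      have hj' : ((j - 1 : Fin (m+1)) : ℕ) = (j : ℕ) - 1 :=
        EquivHelpers.fin_sub_one_coe j hj1
      have hγzV : γ z ∈ V := hγUV hz
      have hγz : HasDerivAt γ (deriv γ z) z :=
        (hγ.differentiableAt (hU.mem_nhds hz)).hasDerivAt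
      have e1 : ∀ k : Fin (m+1), M z k j = deriv (fun w => M w k (j - 1)) z
          + (if (k : ℕ) = 0 then 0 else M z (k - 1) (j - 1)) * deriv γ z :=
        fun k => hMrec' k j hj1 z hz
      have e2 : EU z i j = deriv (fun w => EU w i (j - 1)) z
          + (if (i : ℕ) = 0 then 0 else EU z (i - 1) (j - 1)) * uU z :=
        hEUrec' i j hj1 z hz
      have hk : ∀ k : Fin (m+1), HasDerivAt (fun w => EV (γ w) i k * M w k (j - 1))
          (deriv (fun v => EV v i k) (γ z) * deriv γ z * M z k (j - 1)
            + EV (γ z) i k * deriv (fun w => M w k (j - 1)) z) z := by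
        intro k
        have h1 : HasDerivAt (fun v => EV v i k) (deriv (fun v => EV v i k) (γ z)) (γ z) :=
          ((hEVd i k).differentiableAt (hV.mem_nhds hγzV)).hasDerivAt
        have h2 : HasDerivAt (fun w => EV (γ w) i k)
            (deriv (fun v => EV v i k) (γ z) * deriv γ z) z := h1.comp z hγz
        have h3 : HasDerivAt (fun w => M w k (j - 1))
            (deriv (fun w => M w k (j - 1)) z) z :=
          ((hMd k (j - 1)).differentiableAt (hU.mem_nhds hz)).hasDerivAt
        exact h2.mul h3
      have e3 : deriv (fun w => EU w i (j - 1)) z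
          = ∑ k : Fin (m+1), (deriv (fun v => EV v i k) (γ z) * deriv γ z * M z k (j - 1)
            + EV (γ z) i k * deriv (fun w => M w k (j - 1)) z) := by
        have heq : Set.EqOn (fun w => EU w i (j - 1))
            (fun w => ∑ k : Fin (m+1), EV (γ w) i k * M w k (j - 1)) U :=
          fun w hw => (IH (j - 1) (by omega) i w hw).symm
        rw [Filter.EventuallyEq.deriv_eq
          (Filter.eventuallyEq_of_mem (hU.mem_nhds hz) heq)]
        exact (HasDerivAt.fun_sum (fun k _ => hk k)).deriv
      have e4 : (if (i : ℕ) = 0 then (0:ℂ) else EU z (i - 1) (j - 1))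
          = ∑ k : Fin (m+1), (if (i : ℕ) = 0 then (0:ℂ) else EV (γ z) (i - 1) k) * M z k (j - 1) := by
        by_cases hi : (i : ℕ) = 0
        · simp [hi]
        · simp only [hi, ite_false]
          exact (IH (j - 1) (by omega) (i - 1) z hz).symm
      have e5 : ∀ k : Fin m, deriv (fun v => EV v i k.castSucc) (γ z)
          = EV (γ z) i k.succ
            - (if (i : ℕ) = 0 then 0 else EV (γ z) (i - 1) k.castSucc) * uV (γ z) := by
        intro k
        have h := hEVrec' i k.succ (by simp) (γ z) hγzV
        rw [EquivHelpers.succ_sub_one] at h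
        rw [h]; ring
      have e6 : M z (Fin.last m) (j - 1) = 0 :=
        hMlow (Fin.last m) (j - 1) (by simp only [Fin.val_last]; omega) z hz
      have key2 : (∑ k : Fin (m+1),
            EV (γ z) i k * ((if (k : ℕ) = 0 then 0 else M z (k - 1) (j - 1)) * deriv γ z))
          = (∑ k : Fin (m+1), deriv (fun v => EV v i k) (γ z) * deriv γ z * M z k (j - 1))
            + (∑ k : Fin (m+1), (if (i : ℕ) = 0 then (0:ℂ) else EV (γ z) (i - 1) k) * M z k (j - 1))
              * (uV (γ z) * deriv γ z) := by
        rw [Fin.sum_univ_succ]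
        simp only [Fin.val_zero, if_pos, Fin.val_succ, Nat.succ_ne_zero, ite_false,
          zero_mul, mul_zero, zero_add, EquivHelpers.succ_sub_one]
        conv_rhs => rw [Fin.sum_univ_castSucc, Fin.sum_univ_castSucc (f := fun k =>
          (if (i : ℕ) = 0 then (0:ℂ) else EV (γ z) (i - 1) k) * M z k (j - 1))]
        rw [e6]
        simp only [mul_zero, add_zero]
        rw [Finset.sum_mul, ← Finset.sum_add_distrib]
        refine Finset.sum_congr rfl (fun k _ => ?_)
        rw [e5 k]
        ring
      calc (∑ k : Fin (m+1), EV (γ z) i k * M z k j)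
          = ∑ k : Fin (m+1), (EV (γ z) i k * deriv (fun w => M w k (j - 1)) z
              + EV (γ z) i k * ((if (k : ℕ) = 0 then 0 else M z (k - 1) (j - 1)) * deriv γ z)) := by
            refine Finset.sum_congr rfl (fun k _ => ?_)
            rw [e1 k]; ring
        _ = (∑ k : Fin (m+1), EV (γ z) i k * deriv (fun w => M w k (j - 1)) z)
            + ∑ k : Fin (m+1), EV (γ z) i k * ((if (k : ℕ) = 0 then 0 else M z (k - 1) (j - 1)) * deriv γ z) :=
            Finset.sum_add_distrib
        _ = EU z i j := by
            rw [key2, e2, e3, e4, hu z hz]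
            rw [Finset.sum_add_distrib]
            ring
  intro z hz
  ext i j
  rw [Matrix.mul_apply]
  exact KEY (j : ℕ) j le_rfl i z hz
end
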